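/- Let C be a random set and θ* a fixed parameter, ℒ : 2^Θ × Θ → [0,B] a loss with ℒ(C,θ) = 0 whenever θ ∈ C, and E[ℒ(C,θ*)] ≤ β for β ∈ (0,B). Fix τ ∈ (β, B) and define the synthetic p-value p(θ) to be uniform on (0, β/τ) if ℒ(C,θ) ≥ τ and uniform on (β/τ, 1) otherwise, independent of C. Then P(p(θ*) ≤ t) ≤ t for all t ∈ [0,1]. -/

import Mathlib

open MeasureTheory Set

lemma key_real (a t m n : ℝ) (ha : 0 < a) (ha1 : a < 1) (hm : 0 ≤ m) (hma : m ≤ a)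
    (hn : 0 ≤ n) (hmn : m + n = 1) (ht0 : 0 ≤ t) (ht1 : t ≤ 1) :
    m * min 1 (max 0 (t / a)) + n * min 1 (max 0 ((t - a) / (1 - a))) ≤ t := by
  rcases le_or_gt t a with h | h
  · have h2 : (t - a) / (1 - a) ≤ 0 := by
      apply div_nonpos_of_nonpos_of_nonneg <;> linarith
    have hmax : max 0 ((t - a) / (1 - a)) = 0 := max_eq_left h2
    rw [hmax]
    have hc1 : min 1 (max 0 (t / a)) ≤ t / a := min_le_of_right_le (max_le (by positivity) le_rfl)
    have hc1' : 0 ≤ min 1 (max 0 (t / a)) := le_min zero_le_one (le_max_left _ _)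
    have hmin0 : min (1:ℝ) 0 = 0 := min_eq_right zero_le_one
    rw [hmin0, mul_zero, add_zero]
    have h3 : m * min 1 (max 0 (t / a)) ≤ a * (t / a) := mul_le_mul hma hc1 hc1' ha.le
    have h4 : a * (t / a) = t := by field_simp
    linarith
  · have h1a : 0 < 1 - a := by linarith
    have hc1 : min 1 (max 0 (t / a)) ≤ 1 := min_le_left _ _
    have hc1' : 0 ≤ min 1 (max 0 (t / a)) := le_min zero_le_one (le_max_left _ _)
    have hr : (t - a) / (1 - a) ≤ 1 := by rw [div_le_one h1a]; linarith
    have hr0 : 0 ≤ (t - a) / (1 - a) := div_nonneg (by linarith) h1a.le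
    have hc2 : min 1 (max 0 ((t - a) / (1 - a))) = (t - a) / (1 - a) := by
      rw [max_eq_right hr0, min_eq_right hr]
    rw [hc2]
    have key : m + n * ((t - a) / (1 - a)) ≤ t := by
      have hn1 : n = 1 - m := by linarith
      have hr1 : (t - a) / (1 - a) ≤ 1 := hr
      have : m + (1 - m) * ((t - a) / (1 - a)) ≤ a + (1 - a) * ((t - a) / (1 - a)) := by
        nlinarith [mul_nonneg (sub_nonneg.2 hma) (sub_nonneg.2 hr1)]
      have heq : a + (1 - a) * ((t - a) / (1 - a)) = t := by field_simp; ring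
      rw [hn1]; linarith
    have : m * min 1 (max 0 (t / a)) ≤ m := by nlinarith
    nlinarith [mul_le_mul_of_nonneg_left hr hn]

theorem stmt_15 {Ω Θ : Type*} [MeasurableSpace Ω] (μ : Measure Ω) [IsProbabilityMeasure μ]
    (B β τ : ℝ) (hB : 0 < B) (hβ : β ∈ Set.Ioo 0 B) (hτ : τ ∈ Set.Ioo β B)
    (C : Ω → Set Θ) (θs : Θ) (Lo : Set Θ → Θ → ℝ)
    (hrange : ∀ s θ, Lo s θ ∈ Set.Icc 0 B)
    (hzero : ∀ s θ, θ ∈ s → Lo s θ = 0)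
    (hint : Integrable (fun ω => Lo (C ω) θs) μ)
    (hrisk : ∫ ω, Lo (C ω) θs ∂μ ≤ β)
    (p : Ω → ℝ) (hp : Measurable p)
    (hunif1 : ∀ t : ℝ,
      μ ({ω | p ω ≤ t} ∩ {ω | τ ≤ Lo (C ω) θs})
        = μ {ω | τ ≤ Lo (C ω) θs} * ENNReal.ofReal (min 1 (max 0 (t / (β / τ)))))
    (hunif2 : ∀ t : ℝ,
      μ ({ω | p ω ≤ t} ∩ {ω | τ ≤ Lo (C ω) θs}ᶜ)
        = μ ({ω | τ ≤ Lo (C ω) θs}ᶜ)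
            * ENNReal.ofReal (min 1 (max 0 ((t - β / τ) / (1 - β / τ))))) :
    ∀ t ∈ Set.Icc (0 : ℝ) 1, μ {ω | p ω ≤ t} ≤ ENNReal.ofReal t := by
  intro t ht
  obtain ⟨hβ0, hβB⟩ := hβ
  obtain ⟨hβτ, hτB⟩ := hτ
  have hτ0 : 0 < τ := lt_trans hβ0 hβτ
  set A : Set Ω := {ω | τ ≤ Lo (C ω) θs} with hA
  set a : ℝ := β / τ with ha
  have ha0 : 0 < a := div_pos hβ0 hτ0
  have ha1 : a < 1 := (div_lt_one hτ0).2 hβτ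
  -- A is null measurable
  have hAnm : NullMeasurableSet A μ := by
    have : A = (fun ω => Lo (C ω) θs) ⁻¹' Ici τ := rfl
    rw [this]
    exact hint.aemeasurable.nullMeasurable measurableSet_Ici
  have hsum : μ A + μ Aᶜ = 1 := by rw [measure_add_measure_compl₀ hAnm, measure_univ]
  -- Markov
  have hmarkov : (μ A).toReal ≤ a := by
    have h1 : τ * (μ A).toReal ≤ ∫ ω, Lo (C ω) θs ∂μ :=
      mul_meas_ge_le_integral_of_nonneg (ae_of_all _ fun ω => (hrange (C ω) θs).1) hint τ
    have h2 : τ * (μ A).toReal ≤ β := le_trans h1 hrisk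
    rw [ha, le_div_iff₀ hτ0, mul_comm]
    exact h2
  have hAfin : μ A ≠ ⊤ := measure_ne_top μ A
  have hAcfin : μ Aᶜ ≠ ⊤ := measure_ne_top μ Aᶜ
  set m : ℝ := (μ A).toReal with hmdef
  set n : ℝ := (μ Aᶜ).toReal with hndef
  have hm0 : 0 ≤ m := ENNReal.toReal_nonneg
  have hn0 : 0 ≤ n := ENNReal.toReal_nonneg
  have hmn : m + n = 1 := by
    rw [hmdef, hndef, ← ENNReal.toReal_add hAfin hAcfin, hsum]; simp
  have hsplit : μ {ω | p ω ≤ t} ≤ μ ({ω | p ω ≤ t} ∩ A) + μ ({ω | p ω ≤ t} ∩ Aᶜ) :=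
    le_trans (le_of_eq (by rw [Set.inter_union_compl])) (measure_union_le _ _)
  rw [hunif1 t, hunif2 t] at hsplit
  calc μ {ω | p ω ≤ t}
      ≤ μ A * ENNReal.ofReal (min 1 (max 0 (t / a)))
        + μ Aᶜ * ENNReal.ofReal (min 1 (max 0 ((t - a) / (1 - a)))) := hsplit
    _ = ENNReal.ofReal (m * min 1 (max 0 (t / a)) + n * min 1 (max 0 ((t - a) / (1 - a)))) := by
        rw [ENNReal.ofReal_add (by positivity) (by positivity),
          ← ENNReal.ofReal_toReal hAfin, ← ENNReal.ofReal_toReal hAcfin,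
          ← ENNReal.ofReal_mul hm0, ← ENNReal.ofReal_mul hn0]
    _ ≤ ENNReal.ofReal t := ENNReal.ofReal_le_ofReal
        (key_real a t m n ha0 ha1 hm0 hmarkov hn0 hmn ht.1 ht.2)
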